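/- For each positive integer Δ and each r ≥ 1, the matrix [I_r | D_r | f] is Δ-modular where f ∈ ℤ^r has exactly Δ entries equal to 1, exactly Δ entries equal to −1, and all other entries 0 (assuming r ≥ 2Δ), and f is not in the integer span of any set of fewer than Δ columns of [I_r | D_r]. -/

import Mathlib

/-- A "good" column: entries in {1,-1,0}, at most one `1` and at most one `-1`. -/
def ColP {n : ℕ} (c : Fin n → ℤ) : Prop :=
  (∀ i, c i = 1 ∨ c i = -1 ∨ c i = 0) ∧
  (Finset.univ.filter fun i => c i = 1).card ≤ 1 ∧
  (Finset.univ.filter fun i => c i = -1).card ≤ 1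

lemma colP_single {n : ℕ} (k : Fin n) : ColP (fun i => if i = k then (1:ℤ) else 0) := by
  refine ⟨fun i => by by_cases h : i = k <;> simp [h], ?_, ?_⟩
  · rw [Finset.card_le_one]
    intro a ha b hb
    simp only [Finset.mem_filter] at ha hb
    have ha' : a = k := by by_contra h; simp [h] at ha
    have hb' : b = k := by by_contra h; simp [h] at hb
    rw [ha', hb']
  · rw [Finset.card_le_one]
    intro a ha b hb
    simp only [Finset.mem_filter] at ha hb
    by_cases h : a = k <;> simp [h] at ha

lemma colP_diff {n : ℕ} (a b : Fin n) (hab : a ≠ b) :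
    ColP (fun i => (if i = a then (1:ℤ) else 0) - (if i = b then 1 else 0)) := by
  refine ⟨fun i => ?_, ?_, ?_⟩
  · rcases eq_or_ne i a with h | h <;> rcases eq_or_ne i b with h' | h' <;>
      simp_all
  · rw [Finset.card_le_one]
    intro x hx y hy
    simp only [Finset.mem_filter] at hx hy
    have key : ∀ z : Fin n, ((if z = a then (1:ℤ) else 0) - (if z = b then 1 else 0)) = 1 →
        z = a := by
      intro z hz
      by_contra h
      rcases eq_or_ne z b with h' | h'
      · rw [if_neg h, if_pos h'] at hz; norm_num at hz
      · rw [if_neg h, if_neg h'] at hz; norm_num at hz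
    rw [key x hx.2, key y hy.2]
  · rw [Finset.card_le_one]
    intro x hx y hy
    simp only [Finset.mem_filter] at hx hy
    have key : ∀ z : Fin n, ((if z = a then (1:ℤ) else 0) - (if z = b then 1 else 0)) = -1 →
        z = b := by
      intro z hz
      by_contra h
      rcases eq_or_ne z a with h' | h'
      · rw [if_pos h', if_neg h] at hz; norm_num at hz
      · rw [if_neg h', if_neg h] at hz; norm_num at hz
    rw [key x hx.2, key y hy.2]

lemma colP_comp {n m : ℕ} {c : Fin n → ℤ} (h : ColP c) (e : Fin m → Fin n)
    (he : Function.Injective e) : ColP (fun i => c (e i)) := by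
  obtain ⟨h1, h2, h3⟩ := h
  refine ⟨fun i => h1 (e i), le_trans ?_ h2, le_trans ?_ h3⟩ <;>
  · apply Finset.card_le_card_of_injOn e
    · intro x hx; simp only [Finset.coe_filter, Finset.mem_coe, Finset.mem_filter, Finset.mem_univ, true_and, Set.mem_setOf_eq] at hx ⊢; exact hx
    · exact he.injOn

/-- Determinant of a matrix all of whose columns are good is in `{-1,0,1}`. -/
lemma det_le_one : ∀ n (A : Matrix (Fin n) (Fin n) ℤ),
    (∀ j, ColP (fun i => A i j)) → |A.det| ≤ 1 := by
  intro n
  induction n with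
  | zero => intro A _; simp [Matrix.det_fin_zero]
  | succ n ih =>
    intro A hA
    by_cases h0 : ∃ j, ∀ i, A i j = 0
    · obtain ⟨j, hj⟩ := h0
      rw [Matrix.det_eq_zero_of_column_eq_zero j hj]; simp
    by_cases h1 : ∃ j i0, A i0 j ≠ 0 ∧ ∀ i, i ≠ i0 → A i j = 0
    · obtain ⟨j, i0, hne, hz⟩ := h1
      rw [Matrix.det_succ_column A j]
      have hterm : ∀ i : Fin (n+1), i ≠ i0 →
          (-1:ℤ) ^ (i + j : ℕ) * A i j * (A.submatrix i.succAbove j.succAbove).det = 0 := by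
        intro i hi; rw [hz i hi]; ring
      rw [Finset.sum_eq_single i0 (fun i _ hi => hterm i hi) (by simp)]
      have hm : |(A.submatrix i0.succAbove j.succAbove).det| ≤ 1 := by
        apply ih
        intro j'
        exact colP_comp (hA (j.succAbove j')) _ (Fin.succAbove_right_injective)
      have hentry : |A i0 j| ≤ 1 := by
        have h := (hA j).1 i0
        rcases h with h | h | h <;> (change A i0 j = _ at h; rw [h]) <;> norm_num
      calc |(-1:ℤ) ^ (i0 + j : ℕ) * A i0 j * (A.submatrix i0.succAbove j.succAbove).det|
          = |((-1:ℤ) ^ (i0 + j : ℕ))| * |A i0 j| * |(A.submatrix i0.succAbove j.succAbove).det| := by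
            rw [abs_mul, abs_mul]
        _ ≤ 1 * 1 * 1 := by
            refine mul_le_mul (mul_le_mul ?_ hentry (abs_nonneg _) ?_) hm (abs_nonneg _) ?_
            · rw [abs_pow]; simp
            · positivity
            · positivity
        _ = 1 := by ring
    · push_neg at h0 h1
      have hsum : ∀ j, ∑ i, A i j = 0 := by
        intro j
        obtain ⟨hv, hc1, hcm⟩ := hA j
        simp only at hv hc1 hcm
        have key : ∑ i, A i j =
            ((Finset.univ.filter fun i => A i j = 1).card : ℤ)
            - ((Finset.univ.filter fun i => A i j = -1).card : ℤ) := by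
          rw [← Finset.sum_boole, ← Finset.sum_boole, ← Finset.sum_sub_distrib]
          apply Finset.sum_congr rfl
          intro i _
          rcases hv i with h | h | h <;> simp [h]
        obtain ⟨i0, hi0⟩ := h0 j
        obtain ⟨i1, hi1ne, hi1⟩ := h1 j i0 hi0
        have hcard1 : ∀ i, A i j = 1 → (Finset.univ.filter fun i => A i j = 1).card = 1 :=
          fun i hi => le_antisymm hc1 (Finset.card_pos.mpr ⟨i, by simp [hi]⟩)
        have hcardm : ∀ i, A i j = -1 → (Finset.univ.filter fun i => A i j = -1).card = 1 :=
          fun i hi => le_antisymm hcm (Finset.card_pos.mpr ⟨i, by simp [hi]⟩)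
        have hv0 := hv i0
        have hv1 := hv i1
        change A i0 j = 1 ∨ A i0 j = -1 ∨ A i0 j = 0 at hv0
        change A i1 j = 1 ∨ A i1 j = -1 ∨ A i1 j = 0 at hv1
        have hcards : (Finset.univ.filter fun i => A i j = 1).card = 1 ∧
            (Finset.univ.filter fun i => A i j = -1).card = 1 := by
          rcases hv0 with h0' | h0' | h0'
          · rcases hv1 with h1' | h1' | h1'
            · exfalso
              have := Finset.one_lt_card.mpr
                ⟨i0, (by simp [h0'] : i0 ∈ Finset.univ.filter fun i => A i j = 1),
                 i1, by simp [h1'], hi1ne.symm⟩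
              omega
            · exact ⟨hcard1 i0 h0', hcardm i1 h1'⟩
            · exact absurd h1' hi1
          · rcases hv1 with h1' | h1' | h1'
            · exact ⟨hcard1 i1 h1', hcardm i0 h0'⟩
            · exfalso
              have := Finset.one_lt_card.mpr
                ⟨i0, (by simp [h0'] : i0 ∈ Finset.univ.filter fun i => A i j = -1),
                 i1, by simp [h1'], hi1ne.symm⟩
              omega
            · exact absurd h1' hi1
          · exact absurd h0' hi0
        rw [key, hcards.1, hcards.2]; ring
      have hdet : A.det = 0 := by
        rw [← Matrix.exists_vecMul_eq_zero_iff]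
        refine ⟨fun _ => 1, ?_, ?_⟩
        · intro h
          have := congrFun h 0
          simp at this
        · funext j
          simpa [Matrix.vecMul, dotProduct] using hsum j
      rw [hdet]; simp

lemma det_updateCol_finset_sum {n : ℕ} (M : Matrix (Fin n) (Fin n) ℤ) (j : Fin n)
    {α : Type*} [DecidableEq α] (s : Finset α) (u : α → Fin n → ℤ) :
    (M.updateCol j (∑ k ∈ s, u k)).det = ∑ k ∈ s, (M.updateCol j (u k)).det := by
  induction s using Finset.induction_on with
  | empty =>
    simp only [Finset.sum_empty]
    apply Matrix.det_eq_zero_of_column_eq_zero j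
    intro i; simp [Matrix.updateCol_self]
  | @insert a t ha ih =>
    rw [Finset.sum_insert ha, Finset.sum_insert ha, ← ih, Matrix.det_updateCol_add]

/-- The matrix `[I_r | D_r | f]`, where `D_r` has columns `eᵢ − eⱼ` for `i < j`. -/
def cliqueExtMatrix (r : ℕ) (f : Fin r → ℤ) :
    Matrix (Fin r) (Fin r ⊕ {p : Fin r × Fin r // p.1 < p.2} ⊕ Unit) ℤ :=
  Matrix.of fun i j =>
    match j with
    | Sum.inl k => if i = k then 1 else 0
    | Sum.inr (Sum.inl p) => (if i = p.1.1 then 1 else 0) - (if i = p.1.2 then 1 else 0)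
    | Sum.inr (Sum.inr _) => f i


/-- If `f` has exactly `Δ` entries `1`, exactly `Δ` entries `−1` and all other entries `0`
(with `r ≥ 2Δ`), then `[I_r | D_r | f]` is `Δ`-modular, and `f` is not an integer linear
combination of fewer than `Δ` columns of `[I_r | D_r]`. -/
theorem tight_single_element_extension (Δ : ℕ) (hΔ : 1 ≤ Δ) (r : ℕ) (hr : 2 * Δ ≤ r)
    (f : Fin r → ℤ)
    (hones : (Finset.univ.filter fun i => f i = 1).card = Δ)
    (hminus : (Finset.univ.filter fun i => f i = -1).card = Δ)
    (hvals : ∀ i, f i = 1 ∨ f i = -1 ∨ f i = 0) :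
    (∀ g : Fin r → (Fin r ⊕ {p : Fin r × Fin r // p.1 < p.2} ⊕ Unit),
      |((cliqueExtMatrix r f).submatrix id g).det| ≤ (Δ : ℤ)) ∧
    ¬ ∃ (s : Finset (Fin r → ℤ)) (c : (Fin r → ℤ) → ℤ),
        s.card < Δ ∧
        (∀ v ∈ s, (∃ i : Fin r, v = Pi.single i 1) ∨
          (∃ i j : Fin r, i < j ∧ v = Pi.single i 1 - Pi.single j 1)) ∧
        f = ∑ v ∈ s, c v • v := by
  classical
  set ones := Finset.univ.filter fun i => f i = 1 with hones_def
  set minus := Finset.univ.filter fun i => f i = -1 with hminus_def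
  have hmem_ones : ∀ i, i ∈ ones ↔ f i = 1 := by intro i; simp [hones_def]
  have hmem_minus : ∀ i, i ∈ minus ↔ f i = -1 := by intro i; simp [hminus_def]
  constructor
  · intro g
    set B := (cliqueExtMatrix r f).submatrix id g with hB
    have hDpos : (0:ℤ) ≤ (Δ:ℤ) := Int.natCast_nonneg Δ
    have hgood : ∀ j : Fin r, g j ≠ Sum.inr (Sum.inr ()) → ColP (fun i => B i j) := by
      intro j hj
      rcases hgj : g j with k | p | u
      · have hcol : (fun i => B i j) = fun i => if i = k then (1:ℤ) else 0 := by
          funext i; simp [hB, Matrix.submatrix_apply, hgj, cliqueExtMatrix]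
        rw [hcol]; exact colP_single k
      · have hcol : (fun i => B i j) = fun i =>
            (if i = p.1.1 then (1:ℤ) else 0) - (if i = p.1.2 then 1 else 0) := by
          funext i; simp [hB, Matrix.submatrix_apply, hgj, cliqueExtMatrix]
        rw [hcol]; exact colP_diff _ _ (ne_of_lt p.2)
      · exact absurd hgj (by cases u; exact hj)
    by_cases htwo : ∃ j1 j2 : Fin r, j1 ≠ j2 ∧ g j1 = Sum.inr (Sum.inr ()) ∧
        g j2 = Sum.inr (Sum.inr ())
    · obtain ⟨j1, j2, hne, hc1, hc2⟩ := htwo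
      have hzero : B.det = 0 := Matrix.det_zero_of_column_eq hne (fun k => by
        simp [hB, Matrix.submatrix_apply, hc1, hc2, cliqueExtMatrix])
      rw [hzero]; simpa using hDpos
    by_cases hone : ∃ j0, g j0 = Sum.inr (Sum.inr ())
    · obtain ⟨j0, hj0⟩ := hone
      push_neg at htwo
      have honly : ∀ j, j ≠ j0 → g j ≠ Sum.inr (Sum.inr ()) := fun j hj hgj =>
        htwo j j0 hj hgj hj0
      have hcardeq : Fintype.card ↥ones = Fintype.card ↥minus := by
        rw [Fintype.card_coe, Fintype.card_coe, hones, hminus]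
      set σ : ↥ones ≃ ↥minus := Fintype.equivOfCardEq hcardeq with hσ
      set d : ↥ones → Fin r → ℤ := fun k i =>
        (if i = (k : Fin r) then 1 else 0) - (if i = ((σ k : ↥minus) : Fin r) then 1 else 0)
        with hd
      have hfd : f = ∑ k ∈ ones.attach, d k := by
        funext i
        rw [Finset.sum_apply]
        have e1 : ∑ k ∈ ones.attach, (if i = (k:Fin r) then (1:ℤ) else 0)
            = if i ∈ ones then 1 else 0 := by
          rw [Finset.sum_attach ones (fun x => if i = x then (1:ℤ) else 0)]
          exact Finset.sum_ite_eq ones i (fun _ => (1:ℤ))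
        have e2 : ∑ k ∈ ones.attach, (if i = ((σ k : ↥minus) : Fin r) then (1:ℤ) else 0)
            = if i ∈ minus then 1 else 0 := by
          rw [ones.attach_eq_univ,
            Equiv.sum_comp σ (fun m : ↥minus => if i = (m : Fin r) then (1:ℤ) else 0),
            ← minus.attach_eq_univ,
            Finset.sum_attach minus (fun x => if i = x then (1:ℤ) else 0)]
          exact Finset.sum_ite_eq minus i (fun _ => (1:ℤ))
        have hsplit : ∑ k ∈ ones.attach, d k i
            = (if i ∈ ones then (1:ℤ) else 0) - (if i ∈ minus then 1 else 0) := by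
          simp only [hd]
          rw [Finset.sum_sub_distrib, e1, e2]
        rw [hsplit]
        rcases hvals i with h | h | h <;> simp [hmem_ones, hmem_minus, h]
      have hBup : B = B.updateCol j0 f := by
        have hcol : (fun i => B i j0) = f := by
          funext i; simp [hB, Matrix.submatrix_apply, hj0, cliqueExtMatrix]
        conv_lhs => rw [← Matrix.updateCol_eq_self B j0]
        rw [show (fun i => B i j0) = f from hcol]
      rw [hBup, hfd, det_updateCol_finset_sum]
      have hterm : ∀ k ∈ ones.attach, |(B.updateCol j0 (d k)).det| ≤ 1 := by
        intro k _
        apply det_le_one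
        intro j
        by_cases hj : j = j0
        · have hcol : (fun i => (B.updateCol j0 (d k)) i j) = d k := by
            funext i; rw [hj, Matrix.updateCol_self]
          rw [hcol]
          have hk1 : f (k : Fin r) = 1 := (hmem_ones _).mp k.2
          have hk2 : f ((σ k : ↥minus) : Fin r) = -1 := (hmem_minus _).mp (σ k).2
          exact colP_diff _ _ (fun h => by rw [h, hk2] at hk1; norm_num at hk1)
        · have hcol : (fun i => (B.updateCol j0 (d k)) i j) = fun i => B i j := by
            funext i; rw [Matrix.updateCol_ne hj]
          rw [hcol]
          exact hgood j (honly j hj)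
      calc |∑ k ∈ ones.attach, (B.updateCol j0 (d k)).det|
          ≤ ∑ k ∈ ones.attach, |(B.updateCol j0 (d k)).det| :=
            Finset.abs_sum_le_sum_abs _ _
        _ ≤ ∑ _k ∈ ones.attach, 1 := Finset.sum_le_sum hterm
        _ = (ones.attach.card : ℤ) := by simp
        _ = (Δ : ℤ) := by rw [Finset.card_attach, hones]
    · push_neg at hone
      have hle : |B.det| ≤ 1 := det_le_one _ _ (fun j => hgood j (hone j))
      calc |B.det| ≤ 1 := hle
        _ ≤ (Δ:ℤ) := by exact_mod_cast hΔ
  · rintro ⟨s, c, hcard, hvs, hf⟩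
    have hgen : ∀ (v : Fin r → ℤ) (w : Finset (Fin r)), (∀ x, v x ≠ 0 → x ∈ w) →
        (Finset.univ.filter fun i => v i ≠ 0).card ≤ w.card := by
      intro v w h
      apply Finset.card_le_card
      intro x hx
      exact h x (Finset.mem_filter.mp hx).2
    have hsupp : ∀ v ∈ s, (Finset.univ.filter fun i => v i ≠ 0).card ≤ 2 := by
      intro v hv
      rcases hvs v hv with ⟨i, rfl⟩ | ⟨i, j, hij, rfl⟩
      · refine le_trans (hgen _ {i} ?_) (by simp)
        intro x hx
        by_contra h
        simp only [Finset.mem_singleton] at h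
        exact hx (by simp [Pi.single_apply, h])
      · refine le_trans (hgen _ {i, j} ?_) ((Finset.card_insert_le _ _).trans (by simp))
        intro x hx
        by_contra h
        simp only [Finset.mem_insert, Finset.mem_singleton, not_or] at h
        exact hx (by simp [Pi.single_apply, h.1, h.2])
    set T := s.biUnion (fun v => Finset.univ.filter fun i => v i ≠ 0) with hT
    have hTcard : T.card ≤ 2 * s.card := by
      calc T.card ≤ ∑ v ∈ s, (Finset.univ.filter fun i => v i ≠ 0).card :=
            Finset.card_biUnion_le
        _ ≤ ∑ _v ∈ s, 2 := Finset.sum_le_sum hsupp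
        _ = 2 * s.card := by rw [Finset.sum_const, smul_eq_mul, mul_comm]
    have hsub : ones ∪ minus ⊆ T := by
      intro i hi
      have hfi : f i ≠ 0 := by
        rcases Finset.mem_union.mp hi with h | h
        · rw [(hmem_ones i).mp h]; norm_num
        · rw [(hmem_minus i).mp h]; norm_num
      have hex : ∃ v ∈ s, v i ≠ 0 := by
        by_contra h
        push_neg at h
        apply hfi
        have := congrFun hf i
        rw [Finset.sum_apply] at this
        rw [this]
        apply Finset.sum_eq_zero
        intro v hv
        simp [h v hv]
      obtain ⟨v, hv, hvi⟩ := hex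
      exact Finset.mem_biUnion.mpr ⟨v, hv, by simp [hvi]⟩
    have hdisj : Disjoint ones minus := by
      rw [Finset.disjoint_left]
      intro i h1 h2
      have e1 := (hmem_ones i).mp h1
      have e2 := (hmem_minus i).mp h2
      omega
    have hcard2 : (ones ∪ minus).card = 2 * Δ := by
      rw [Finset.card_union_of_disjoint hdisj, hones, hminus]; ring
    have hle := Finset.card_le_card hsub
    omega
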